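/- Let T be a finite directed tree satisfying (G1), (G2), (G3), and let F be the forest obtained by performing the splitting operation (remove the split node, remove the leaf on its incoming arc, and cap each outgoing arc with a new leaf) simultaneously at every split node of T. Then every connected component of F satisfies (G1), (G2), (G3), has no split node, and contains exactly one peak node (node of in-degree 3). -/

import Mathlib

structure DirTree where
  V : Type
  [fintypeV : Fintype V]
  arc : V → V → Prop
  noLoop : ∀ v, ¬ arc v v
  noTwoWay : ∀ u v, arc u v → ¬ arc v u
  isTree : (SimpleGraph.fromRel arc).IsTree

attribute [instance] DirTree.fintypeV

namespace DirTree
variable (T : DirTree)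

/-- Number of outgoing arcs at `v`. -/
noncomputable def outDeg (v : T.V) : ℕ := Nat.card {u : T.V // T.arc v u}

/-- Number of incoming arcs at `v`. -/
noncomputable def inDeg (v : T.V) : ℕ := Nat.card {u : T.V // T.arc u v}

/-- Total degree of `v`. -/
noncomputable def deg (v : T.V) : ℕ := T.inDeg v + T.outDeg v

/-- A leaf is a node of total degree 1. -/
def IsLeaf (v : T.V) : Prop := T.deg v = 1

/-- (G1): every leaf has in-degree 0 and out-degree 1. -/
def G1 : Prop := ∀ v, T.IsLeaf v → T.inDeg v = 0 ∧ T.outDeg v = 1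

/-- (G2): every interior node has total degree 3 and at most two outgoing arcs. -/
def G2 : Prop := ∀ v, ¬ T.IsLeaf v → T.deg v = 3 ∧ T.outDeg v ≤ 2

/-- (G3): every node of out-degree 2 has its incoming arcs coming from leaves. -/
def G3 : Prop := ∀ v, T.outDeg v = 2 → ∀ u, T.arc u v → T.IsLeaf u

/-- A split node has out-degree 2. -/
def IsSplit (v : T.V) : Prop := T.outDeg v = 2

/-- A peak node has in-degree 3. -/
def IsPeak (v : T.V) : Prop := T.inDeg v = 3

end DirTree

/-- A node of `T` survives the simultaneous splitting operation iff it is neither a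
split node nor a leaf whose outgoing arc enters a split node. -/
def Kept (T : DirTree) (v : T.V) : Prop :=
  ¬ T.IsSplit v ∧ ¬ (T.IsLeaf v ∧ ∃ w, T.IsSplit w ∧ T.arc v w)

/-- Vertex set of the forest `F`: the surviving nodes of `T` together with one new
leaf for every outgoing arc `(s, u)` of every split node `s`. -/
def ForestV (T : DirTree) : Type :=
  {v : T.V // Kept T v} ⊕ {p : T.V × T.V // T.IsSplit p.1 ∧ T.arc p.1 p.2}

/-- Arc relation of the forest `F`: old arcs among surviving nodes are kept, and the
new leaf corresponding to an outgoing arc `(s, u)` gets a single arc to `u`. -/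
def ForestArc (T : DirTree) : ForestV T → ForestV T → Prop
  | Sum.inl a, Sum.inl b => T.arc a.1 b.1
  | Sum.inr p, Sum.inl b => p.1.2 = b.1
  | _, _ => False

noncomputable def foutDeg (T : DirTree) (v : ForestV T) : ℕ :=
  Nat.card {u : ForestV T // ForestArc T v u}

noncomputable def finDeg (T : DirTree) (v : ForestV T) : ℕ :=
  Nat.card {u : ForestV T // ForestArc T u v}

noncomputable def fdeg (T : DirTree) (v : ForestV T) : ℕ := finDeg T v + foutDeg T v

/-- The underlying undirected graph of the forest `F`. -/
def ForestGraph (T : DirTree) : SimpleGraph (ForestV T) := SimpleGraph.fromRel (ForestArc T)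


section Aux

open SimpleGraph Relation

variable {T : DirTree}

instance : Finite (ForestV T) :=
  inferInstanceAs (Finite ({v : T.V // Kept T v} ⊕ {p : T.V × T.V // T.IsSplit p.1 ∧ T.arc p.1 p.2}))

lemma subsingleton_of_card_le_one {α : Type} [Finite α] (h : Nat.card α ≤ 1) :
    Subsingleton α := by
  rcases isEmpty_or_nonempty α with he | hn
  · infer_instance
  · exact (Nat.card_eq_one_iff_unique.mp (le_antisymm h Nat.card_pos)).1

lemma tInDeg_pos {u v : T.V} (h : T.arc u v) : 0 < T.inDeg v := by
  have : Nonempty {w : T.V // T.arc w v} := ⟨⟨u, h⟩⟩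
  exact Nat.card_pos

lemma not_leaf_of_arc_to (hG1 : T.G1) {u v : T.V} (h : T.arc u v) : ¬ T.IsLeaf v := by
  intro hl
  have h0 := (hG1 v hl).1
  have h1 := tInDeg_pos h
  omega

lemma split_not_leaf (hG1 : T.G1) {v : T.V} (hs : T.IsSplit v) : ¬ T.IsLeaf v := by
  intro hl
  have h1 := (hG1 v hl).2
  have h2 : T.outDeg v = 2 := hs
  omega

lemma tOutDeg_le_two (hG1 : T.G1) (hG2 : T.G2) (v : T.V) : T.outDeg v ≤ 2 := by
  by_cases hl : T.IsLeaf v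
  · have := (hG1 v hl).2; omega
  · exact (hG2 v hl).2

lemma arc_unique_of_outDeg_le_one {v : T.V} (h : T.outDeg v ≤ 1) {a b : T.V}
    (ha : T.arc v a) (hb : T.arc v b) : a = b := by
  have hs : Subsingleton {u : T.V // T.arc v u} := subsingleton_of_card_le_one h
  exact congrArg Subtype.val (hs.elim ⟨a, ha⟩ ⟨b, hb⟩)

lemma not_split_target (hG1 : T.G1) (hG3 : T.G3) {s u : T.V} (hs : T.IsSplit s)
    (h : T.arc s u) : ¬ T.IsSplit u := fun hu =>
  split_not_leaf hG1 hs (hG3 u hu s h)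

lemma kept_of_arc_of_kept (hG1 : T.G1) (hG3 : T.G3) {a w : T.V} (ha : Kept T a)
    (h : T.arc a w) : Kept T w := by
  constructor
  · intro hw
    exact ha.2 ⟨hG3 w hw a h, w, hw, h⟩
  · rintro ⟨hl, -⟩
    have h0 := (hG1 w hl).1
    have h1 := tInDeg_pos h
    omega

lemma kept_target_of_split (hG1 : T.G1) (hG3 : T.G3) {s u : T.V}
    (hs : T.IsSplit s) (h : T.arc s u) : Kept T u := by
  constructor
  · exact not_split_target hG1 hG3 hs h
  · rintro ⟨hl, -⟩
    have h0 := (hG1 u hl).1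
    have h1 := tInDeg_pos h
    omega

lemma foutDeg_inl (hG1 : T.G1) (hG3 : T.G3) (a : {v : T.V // Kept T v}) :
    foutDeg T (Sum.inl a) = T.outDeg a.1 := by
  refine (Nat.card_eq_of_bijective
    (fun w : {w : T.V // T.arc a.1 w} =>
      (⟨Sum.inl ⟨w.1, kept_of_arc_of_kept hG1 hG3 a.2 w.2⟩, w.2⟩ :
        {u : ForestV T // ForestArc T (Sum.inl a) u})) ⟨?_, ?_⟩).symm
  · rintro ⟨w, hw⟩ ⟨w', hw'⟩ h
    apply Subtype.ext
    have h2 := congrArg Subtype.val h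
    injection h2 with h3
    have h4 : w = w' := Subtype.mk_eq_mk.mp h3
    exact h4
  · rintro ⟨u, hu⟩
    rcases u with b | p
    · exact ⟨⟨b.1, hu⟩, Subtype.ext (congrArg Sum.inl (Subtype.ext rfl))⟩
    · exact False.elim hu

lemma finDeg_inl (hG1 : T.G1) (a : {v : T.V // Kept T v}) :
    finDeg T (Sum.inl a) = T.inDeg a.1 := by
  classical
  have hkept : ∀ w : T.V, T.arc w a.1 → ¬ T.IsSplit w → Kept T w := by
    intro w hw hs
    refine ⟨hs, ?_⟩
    rintro ⟨hl, s, hss, harc⟩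
    have h1 := (hG1 w hl).2
    have h2 : s = a.1 := arc_unique_of_outDeg_le_one (by omega) harc hw
    exact a.2.1 (h2 ▸ hss)
  refine (Nat.card_eq_of_bijective
    (fun w : {w : T.V // T.arc w a.1} =>
      if hs : T.IsSplit w.1 then
        (⟨Sum.inr ⟨(w.1, a.1), hs, w.2⟩, rfl⟩ : {u : ForestV T // ForestArc T u (Sum.inl a)})
      else ⟨Sum.inl ⟨w.1, hkept w.1 w.2 hs⟩, w.2⟩) ⟨?_, ?_⟩).symm
  · rintro ⟨w, hw⟩ ⟨w', hw'⟩ h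
    apply Subtype.ext
    dsimp only at h
    by_cases hs : T.IsSplit w <;> by_cases hs' : T.IsSplit w'
    · rw [dif_pos hs, dif_pos hs'] at h
      have h2 := congrArg Subtype.val h
      injection h2 with h3
      have h4 : (w, a.1) = (w', a.1) := Subtype.mk_eq_mk.mp h3
      have h5 : w = w' := congrArg Prod.fst h4
      exact h5
    · rw [dif_pos hs, dif_neg hs'] at h
      have h2 := congrArg Subtype.val h
      exact absurd h2 (by simp)
    · rw [dif_neg hs, dif_pos hs'] at h
      have h2 := congrArg Subtype.val h
      exact absurd h2 (by simp)
    · rw [dif_neg hs, dif_neg hs'] at h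
      have h2 := congrArg Subtype.val h
      injection h2 with h3
      have h4 : w = w' := Subtype.mk_eq_mk.mp h3
      exact h4
  · rintro ⟨u, hu⟩
    rcases u with b | p
    · refine ⟨⟨b.1, hu⟩, ?_⟩
      dsimp only
      rw [dif_neg b.2.1]
    · have hu' : p.1.2 = a.1 := hu
      refine ⟨⟨p.1.1, hu' ▸ p.2.2⟩, ?_⟩
      dsimp only
      rw [dif_pos p.2.1]
      refine Subtype.ext (congrArg Sum.inr (Subtype.ext ?_))
      exact Prod.ext rfl hu'.symm

lemma foutDeg_inr (hG1 : T.G1) (hG3 : T.G3)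
    (p : {p : T.V × T.V // T.IsSplit p.1 ∧ T.arc p.1 p.2}) :
    foutDeg T (Sum.inr p) = 1 := by
  show Nat.card {u : ForestV T // ForestArc T (Sum.inr p) u} = 1
  rw [Nat.card_eq_one_iff_unique]
  constructor
  · constructor
    rintro ⟨u, hu⟩ ⟨u', hu'⟩
    rcases u with b | q
    · rcases u' with b' | q'
      · have h1 : p.1.2 = b.1 := hu
        have h2 : p.1.2 = b'.1 := hu'
        exact Subtype.ext (congrArg Sum.inl (Subtype.ext (h1 ▸ h2)))
      · exact False.elim hu'
    · exact False.elim hu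
  · exact ⟨⟨Sum.inl ⟨p.1.2, kept_target_of_split hG1 hG3 p.2.1 p.2.2⟩, rfl⟩⟩

lemma finDeg_inr (p : {p : T.V × T.V // T.IsSplit p.1 ∧ T.arc p.1 p.2}) :
    finDeg T (Sum.inr p) = 0 := by
  have : IsEmpty {u : ForestV T // ForestArc T u (Sum.inr p)} := by
    constructor
    rintro ⟨u, hu⟩
    rcases u with b | q
    · exact hu
    · exact hu
  simp [finDeg]

lemma forestArc_ne {x y : ForestV T} (h : ForestArc T x y) : x ≠ y := by
  rcases x with a | p <;> rcases y with b | q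
  · intro he
    injection he with he
    exact T.noLoop b.1 (he ▸ h)
  · exact False.elim h
  · intro he
    cases he
  · exact False.elim h

lemma forestArc_asymm {x y : ForestV T} (h : ForestArc T x y) : ¬ ForestArc T y x := by
  rcases x with a | p <;> rcases y with b | q
  · exact T.noTwoWay a.1 b.1 h
  · exact False.elim h
  · exact fun h' => h'
  · exact False.elim h

lemma adj_iff {x y : ForestV T} :
    (ForestGraph T).Adj x y ↔ x ≠ y ∧ (ForestArc T x y ∨ ForestArc T y x) :=
  SimpleGraph.fromRel_adj _ _ _

lemma adj_of_forestArc {x y : ForestV T} (h : ForestArc T x y) : (ForestGraph T).Adj x y :=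
  adj_iff.mpr ⟨forestArc_ne h, Or.inl h⟩

lemma foutDeg_le_one (hG1 : T.G1) (hG2 : T.G2) (hG3 : T.G3) (v : ForestV T) :
    foutDeg T v ≤ 1 := by
  rcases v with a | p
  · rw [foutDeg_inl hG1 hG3 a]
    have h2 := tOutDeg_le_two hG1 hG2 a.1
    have h3 : T.outDeg a.1 ≠ 2 := a.2.1
    omega
  · rw [foutDeg_inr hG1 hG3 p]

lemma forestArc_unique (hG1 : T.G1) (hG2 : T.G2) (hG3 : T.G3) {v a b : ForestV T}
    (ha : ForestArc T v a) (hb : ForestArc T v b) : a = b := by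
  have hs : Subsingleton {u : ForestV T // ForestArc T v u} :=
    subsingleton_of_card_le_one (foutDeg_le_one hG1 hG2 hG3 v)
  exact congrArg Subtype.val (hs.elim ⟨a, ha⟩ ⟨b, hb⟩)

lemma no_arc_into_inr {z : ForestV T} {p} : ¬ ForestArc T z (Sum.inr p) := by
  rcases z with b | q
  · exact fun h => h
  · exact fun h => h

lemma forestArc_inr {p} {z : ForestV T} (h : ForestArc T (Sum.inr p) z) :
    ∃ b, z = Sum.inl b ∧ b.1 = p.1.2 := by
  rcases z with b | q
  · exact ⟨b, rfl, h.symm⟩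
  · exact False.elim h

lemma adj_inr_unique {p} {z z' : ForestV T} (h : (ForestGraph T).Adj (Sum.inr p) z)
    (h' : (ForestGraph T).Adj (Sum.inr p) z') : z = z' := by
  have h1 : ForestArc T (Sum.inr p) z := by
    rcases (adj_iff.mp h).2 with h1 | h1
    · exact h1
    · exact absurd h1 no_arc_into_inr
  have h2 : ForestArc T (Sum.inr p) z' := by
    rcases (adj_iff.mp h').2 with h2 | h2
    · exact h2
    · exact absurd h2 no_arc_into_inr
  obtain ⟨b, rfl, hb⟩ := forestArc_inr h1
  obtain ⟨b', rfl, hb'⟩ := forestArc_inr h2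
  exact congrArg Sum.inl (Subtype.ext (hb.trans hb'.symm))

lemma cycle_vertex_two_nbrs {V : Type} {G : SimpleGraph V} {x : V} (c : G.Walk x x)
    (hc : c.IsCycle) (hu : ∀ z z', G.Adj x z → G.Adj x z' → z = z') : False := by
  cases c with
  | nil => exact hc.ne_nil rfl
  | @cons _ w _ h q =>
    have h3 := hc.three_le_length
    rw [SimpleGraph.Walk.length_cons] at h3
    obtain ⟨hq, hedge⟩ := (SimpleGraph.Walk.cons_isCycle_iff q h).mp hc
    have hrevnil : ¬ q.reverse.Nil := by
      rw [SimpleGraph.Walk.not_nil_iff_lt_length, SimpleGraph.Walk.length_reverse]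
      omega
    obtain ⟨y, hxy, q₂, hq2⟩ := SimpleGraph.Walk.not_nil_iff.mp hrevnil
    have hyw : y = w := hu y w hxy h
    have hmem : s(x, y) ∈ q.reverse.edges := by rw [hq2]; simp
    rw [SimpleGraph.Walk.edges_reverse, List.mem_reverse, hyw] at hmem
    exact hedge hmem

def toV : ForestV T → T.V
  | Sum.inl a => a.1
  | Sum.inr p => p.1.1

lemma toV_adj {x y : ForestV T} (h : (ForestGraph T).Adj x y) :
    (SimpleGraph.fromRel T.arc).Adj (toV x) (toV y) := by
  obtain ⟨hne, harc⟩ := adj_iff.mp h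
  rcases x with a | p <;> rcases y with b | q
  · show (SimpleGraph.fromRel T.arc).Adj a.1 b.1
    rw [SimpleGraph.fromRel_adj]
    have harc' : T.arc a.1 b.1 ∨ T.arc b.1 a.1 := harc
    rcases harc' with h1 | h1
    · exact ⟨fun he => T.noLoop b.1 (he ▸ h1), Or.inl h1⟩
    · exact ⟨fun he => T.noLoop b.1 (he ▸ h1), Or.inr h1⟩
  · rcases harc with h1 | h1
    · exact False.elim h1
    · have h2 : q.1.2 = a.1 := h1
      have h3 : T.arc q.1.1 a.1 := h2 ▸ q.2.2
      show (SimpleGraph.fromRel T.arc).Adj a.1 q.1.1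
      rw [SimpleGraph.fromRel_adj]
      exact ⟨fun he => T.noLoop q.1.1 (he ▸ h3), Or.inr h3⟩
  · rcases harc with h1 | h1
    · have h2 : p.1.2 = b.1 := h1
      have h3 : T.arc p.1.1 b.1 := h2 ▸ p.2.2
      show (SimpleGraph.fromRel T.arc).Adj p.1.1 b.1
      rw [SimpleGraph.fromRel_adj]
      exact ⟨fun he => T.noLoop b.1 (he ▸ h3), Or.inl h3⟩
    · exact False.elim h1
  · rcases harc with h1 | h1
    · exact False.elim h1
    · exact False.elim h1

def phi (T : DirTree) : ForestGraph T →g SimpleGraph.fromRel T.arc where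
  toFun := toV
  map_rel' := toV_adj

lemma forest_acyclic (hG1 : T.G1) (hG2 : T.G2) (hG3 : T.G3) :
    (ForestGraph T).IsAcyclic := by
  classical
  intro v c hc
  have hinl : ∀ x, x ∈ c.support → ∃ a, x = Sum.inl a := by
    intro x hx
    rcases x with a | p
    · exact ⟨a, rfl⟩
    · exact False.elim (cycle_vertex_two_nbrs (c.rotate _ hx) (hc.rotate hx)
        (fun z z' h h' => adj_inr_unique h h'))
  cases c with
  | nil => exact hc.ne_nil rfl
  | @cons _ w _ h q =>
    have h3 := hc.three_le_length
    rw [SimpleGraph.Walk.length_cons] at h3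
    obtain ⟨hq, hedge⟩ := (SimpleGraph.Walk.cons_isCycle_iff q h).mp hc
    have hmap : (q.map (phi T)).IsPath := by
      rw [SimpleGraph.Walk.isPath_def, SimpleGraph.Walk.support_map]
      refine List.Nodup.map_on ?_ ((SimpleGraph.Walk.isPath_def _).mp hq)
      intro x hx y hy hxy
      have hx' : x ∈ (SimpleGraph.Walk.cons h q).support := by
        rw [SimpleGraph.Walk.support_cons]
        exact List.mem_cons_of_mem _ hx
      have hy' : y ∈ (SimpleGraph.Walk.cons h q).support := by
        rw [SimpleGraph.Walk.support_cons]
        exact List.mem_cons_of_mem _ hy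
      obtain ⟨a, rfl⟩ := hinl x hx'
      obtain ⟨b, rfl⟩ := hinl y hy'
      exact congrArg Sum.inl (Subtype.ext hxy)
    have hPuniq := SimpleGraph.isAcyclic_iff_path_unique.mp T.isTree.2
      ⟨q.map (phi T), hmap⟩ (SimpleGraph.Path.singleton (toV_adj h).symm)
    have hlen := congrArg (fun p : (SimpleGraph.fromRel T.arc).Path (toV w) (toV v) =>
      (p : (SimpleGraph.fromRel T.arc).Walk (toV w) (toV v)).length) hPuniq
    simp only [SimpleGraph.Path.singleton, SimpleGraph.Path.singleton_coe, SimpleGraph.Walk.length_map,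
      SimpleGraph.Walk.length_cons, SimpleGraph.Walk.length_nil] at hlen
    change (q.map (phi T)).length = 1 at hlen
    rw [SimpleGraph.Walk.length_map] at hlen
    omega

open Classical in
noncomputable def fsucc (T : DirTree) (x : ForestV T) : ForestV T :=
  if h : ∃ u, ForestArc T x u then h.choose else x

lemma fsucc_step {x : ForestV T} (h : ∃ u, ForestArc T x u) : ForestArc T x (fsucc T x) := by
  rw [fsucc, dif_pos h]
  exact h.choose_spec

lemma fsucc_fix {x : ForestV T} (h : ¬ ∃ u, ForestArc T x u) : fsucc T x = x := by
  rw [fsucc, dif_neg h]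

lemma fsucc_det (hG1 : T.G1) (hG2 : T.G2) (hG3 : T.G3) {x y : ForestV T}
    (h : ForestArc T x y) : fsucc T x = y :=
  forestArc_unique hG1 hG2 hG3 (fsucc_step ⟨y, h⟩) h

lemma no_transGen_cycle (hG1 : T.G1) (hG2 : T.G2) (hG3 : T.G3) (v : ForestV T) :
    ¬ Relation.TransGen (ForestArc T) v v := by
  intro htg
  have hiter : ∀ {y}, Relation.TransGen (ForestArc T) v y →
      ∃ n, 0 < n ∧ (fsucc T)^[n] v = y := by
    intro y h
    induction h with
    | single h => exact ⟨1, one_pos, by simpa using fsucc_det hG1 hG2 hG3 h⟩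
    | tail h1 h2 ih =>
      obtain ⟨n, hn, hgn⟩ := ih
      exact ⟨n + 1, Nat.succ_pos _, by
        rw [Function.iterate_succ_apply', hgn]; exact fsucc_det hG1 hG2 hG3 h2⟩
  classical
  have hP : ∃ m, 0 < m ∧ (fsucc T)^[m] v = v := hiter htg
  let m := Nat.find hP
  have hm0 : 0 < m := (Nat.find_spec hP).1
  have hmv : (fsucc T)^[m] v = v := (Nat.find_spec hP).2
  have hmin : ∀ k, 0 < k → k < m → (fsucc T)^[k] v ≠ v := by
    intro k hk hkm hkv
    exact Nat.find_min hP hkm ⟨hk, hkv⟩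
  have hvout : ∃ u, ForestArc T v u := by
    obtain ⟨u, hu, -⟩ := Relation.TransGen.head'_iff.mp htg
    exact ⟨u, hu⟩
  have hout : ∀ i, i < m → ∃ u, ForestArc T ((fsucc T)^[i] v) u := by
    intro i him
    by_contra hno
    have hfix : fsucc T ((fsucc T)^[i] v) = (fsucc T)^[i] v := fsucc_fix hno
    have hstay : ∀ j, i ≤ j → (fsucc T)^[j] v = (fsucc T)^[i] v := by
      intro j hij
      induction j, hij using Nat.le_induction with
      | base => rfl
      | succ j hj ih => rw [Function.iterate_succ_apply', ih, hfix]
    have hvi : (fsucc T)^[i] v = v := (hstay m (le_of_lt him)).symm.trans hmv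
    rcases Nat.eq_zero_or_pos i with rfl | hi
    · simp only [Function.iterate_zero_apply] at hvi hno
      exact hno hvout
    · exact hmin i hi him hvi
  have hstep : ∀ i, i < m → ForestArc T ((fsucc T)^[i] v) ((fsucc T)^[i+1] v) := by
    intro i him
    rw [Function.iterate_succ_apply']
    exact fsucc_step (hout i him)
  have hstep0 : ForestArc T v ((fsucc T)^[1] v) := by
    have := hstep 0 hm0
    simpa using this
  have hm1 : m ≠ 1 := by
    intro h1
    rw [h1] at hmv
    exact forestArc_ne hstep0 (by rw [hmv])
  have hm2 : m ≠ 2 := by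
    intro h2
    have hs1 := hstep 1 (by omega)
    have hv2 : (fsucc T)^[1+1] v = v := by rw [show (1:ℕ)+1 = 2 from rfl, ← h2]; exact hmv
    rw [hv2] at hs1
    exact forestArc_asymm hstep0 hs1
  have hm3 : 3 ≤ m := by omega
  have hdist : ∀ i j, 0 < i → i < j → j ≤ m → (fsucc T)^[i] v ≠ (fsucc T)^[j] v := by
    intro i j hi hij hjm heq
    have h1 : (fsucc T)^[m - j + i] v = v := by
      have h2 : (fsucc T)^[m - j] ((fsucc T)^[j] v) = v := by
        rw [← Function.iterate_add_apply, Nat.sub_add_cancel hjm]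
        exact hmv
      rw [← heq, ← Function.iterate_add_apply] at h2
      exact h2
    exact hmin (m - j + i) (by omega) (by omega) h1
  have hbuild : ∀ k, 1 ≤ k → k ≤ m → ∃ p : (ForestGraph T).Walk ((fsucc T)^[1] v) ((fsucc T)^[k] v),
      p.support = (List.range k).map (fun i => (fsucc T)^[i+1] v) := by
    intro k hk1 hkm
    induction k with
    | zero => omega
    | succ k ih =>
      rcases Nat.eq_zero_or_pos k with rfl | hk
      · exact ⟨SimpleGraph.Walk.nil, by simp⟩
      · obtain ⟨p, hp⟩ := ih hk (by omega)
        have hadj : (ForestGraph T).Adj ((fsucc T)^[k] v) ((fsucc T)^[k+1] v) :=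
          adj_of_forestArc (hstep k (by omega))
        refine ⟨p.concat hadj, ?_⟩
        rw [SimpleGraph.Walk.support_concat, hp, List.range_succ]
        simp
  obtain ⟨p, hp⟩ := hbuild m (by omega) le_rfl
  have hadj0 : (ForestGraph T).Adj ((fsucc T)^[1] v) v := (adj_of_forestArc hstep0).symm
  set P := p.copy rfl hmv with hPdef
  have hPsupp : P.support = (List.range m).map (fun i => (fsucc T)^[i+1] v) := by
    rw [hPdef, SimpleGraph.Walk.support_copy, hp]
  have hPpath : P.IsPath := by
    rw [SimpleGraph.Walk.isPath_def, hPsupp]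
    refine List.Nodup.map_on ?_ List.nodup_range
    intro i hi j hj hij
    rw [List.mem_range] at hi hj
    rcases lt_trichotomy i j with h | h | h
    · exact absurd hij (hdist (i+1) (j+1) (by omega) (by omega) (by omega))
    · exact h
    · exact absurd hij.symm (hdist (j+1) (i+1) (by omega) (by omega) (by omega))
  have hPlen : P.length + 1 = m := by
    have := SimpleGraph.Walk.length_support P
    rw [hPsupp] at this
    simp only [List.length_map, List.length_range] at this
    omega
  have hPuniq := SimpleGraph.isAcyclic_iff_path_unique.mp (forest_acyclic hG1 hG2 hG3)
    ⟨P, hPpath⟩ (SimpleGraph.Path.singleton hadj0)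
  have hlen := congrArg (fun q : (ForestGraph T).Path ((fsucc T)^[1] v) v =>
    (q : (ForestGraph T).Walk ((fsucc T)^[1] v) v).length) hPuniq
  simp only [SimpleGraph.Path.singleton, SimpleGraph.Walk.length_cons,
    SimpleGraph.Walk.length_nil] at hlen
  omega

lemma walk_to_sink (hG1 : T.G1) (hG2 : T.G2) (hG3 : T.G3) {a b : ForestV T}
    (hb : ∀ u, ¬ ForestArc T b u) (p : (ForestGraph T).Walk a b) :
    Relation.ReflTransGen (ForestArc T) a b := by
  induction p with
  | nil => exact Relation.ReflTransGen.refl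
  | @cons a c b h q ih =>
    rcases (adj_iff.mp h).2 with hac | hca
    · exact Relation.ReflTransGen.head hac (ih hb)
    · rcases (ih hb).cases_head with rfl | ⟨d, hcd, hdb⟩
      · exact absurd hca (hb a)
      · have hda : d = a := forestArc_unique hG1 hG2 hG3 hcd hca
        exact hda ▸ hdb

lemma exists_sink (hG1 : T.G1) (hG2 : T.G2) (hG3 : T.G3) (v : ForestV T) :
    ∃ b, (∀ u, ¬ ForestArc T b u) ∧ Relation.ReflTransGen (ForestArc T) v b := by
  have hrt : ∀ k, Relation.ReflTransGen (ForestArc T) v ((fsucc T)^[k] v) := by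
    intro k
    induction k with
    | zero => exact Relation.ReflTransGen.refl
    | succ k ih =>
      rw [Function.iterate_succ_apply']
      by_cases h : ∃ u, ForestArc T ((fsucc T)^[k] v) u
      · exact ih.tail (fsucc_step h)
      · rw [fsucc_fix h]; exact ih
  by_cases hfix : ∃ k, ∀ u, ¬ ForestArc T ((fsucc T)^[k] v) u
  · obtain ⟨k, hk⟩ := hfix
    exact ⟨(fsucc T)^[k] v, hk, hrt k⟩
  · exfalso
    push_neg at hfix
    have hstep : ∀ k, ForestArc T ((fsucc T)^[k] v) ((fsucc T)^[k+1] v) := by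
      intro k
      rw [Function.iterate_succ_apply']
      exact fsucc_step (hfix k)
    have key : ∀ a b : ℕ, a < b →
        Relation.TransGen (ForestArc T) ((fsucc T)^[a] v) ((fsucc T)^[b] v) := by
      intro a b hab
      induction b, hab using Nat.le_induction with
      | base => exact Relation.TransGen.single (hstep a)
      | succ b hb ih => exact ih.tail (hstep b)
    obtain ⟨i, j, hne, hij⟩ :=
      Finite.exists_ne_map_eq_of_infinite (fun k => (fsucc T)^[k] v)
    rcases lt_or_gt_of_ne hne with h | h
    · have := key i j h
      rw [← hij] at this
      exact no_transGen_cycle hG1 hG2 hG3 _ this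
    · have := key j i h
      rw [hij] at this
      exact no_transGen_cycle hG1 hG2 hG3 _ this

lemma foutDeg_eq_zero_iff {v : ForestV T} :
    foutDeg T v = 0 ↔ ∀ u, ¬ ForestArc T v u := by
  rw [foutDeg]
  constructor
  · intro h u hu
    have : Nonempty {u : ForestV T // ForestArc T v u} := ⟨⟨u, hu⟩⟩
    have := Nat.card_pos (α := {u : ForestV T // ForestArc T v u})
    omega
  · intro h
    have : IsEmpty {u : ForestV T // ForestArc T v u} := ⟨fun u => h u.1 u.2⟩
    simp

lemma finDeg_eq_three_iff (hG1 : T.G1) (hG2 : T.G2) (hG3 : T.G3) (v : ForestV T) :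
    finDeg T v = 3 ↔ foutDeg T v = 0 := by
  rcases v with a | p
  · rw [finDeg_inl hG1 a, foutDeg_inl hG1 hG3 a]
    constructor
    · intro h3
      by_cases hl : T.IsLeaf a.1
      · have := (hG1 _ hl).1; omega
      · have hd : T.inDeg a.1 + T.outDeg a.1 = 3 := (hG2 _ hl).1
        omega
    · intro h0
      by_cases hl : T.IsLeaf a.1
      · have := (hG1 _ hl).2; omega
      · have hd : T.inDeg a.1 + T.outDeg a.1 = 3 := (hG2 _ hl).1
        omega
  · rw [finDeg_inr p, foutDeg_inr hG1 hG3 p]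
    omega

lemma reachable_of_rtg {a b : ForestV T} (h : Relation.ReflTransGen (ForestArc T) a b) :
    (ForestGraph T).Reachable a b := by
  induction h with
  | refl => exact SimpleGraph.Reachable.refl a
  | tail h1 h2 ih => exact ih.trans (adj_of_forestArc h2).reachable

end Aux

/-- performing the splitting operation simultaneously at every split node of
a (G1)-(G3) directed tree yields a forest each of whose connected components satisfies
(G1)-(G3), has no split node, and contains exactly one peak node (in-degree 3). -/
theorem stmt5 (T : DirTree) (hG1 : T.G1) (hG2 : T.G2) (hG3 : T.G3) :
    (ForestGraph T).IsAcyclic ∧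
    (∀ v : ForestV T, fdeg T v = 1 → finDeg T v = 0 ∧ foutDeg T v = 1) ∧
    (∀ v : ForestV T, fdeg T v ≠ 1 → fdeg T v = 3 ∧ foutDeg T v ≤ 2) ∧
    (∀ v : ForestV T, foutDeg T v ≠ 2) ∧
    (∀ c : (ForestGraph T).ConnectedComponent,
      ∃! v : ForestV T, (ForestGraph T).connectedComponentMk v = c ∧ finDeg T v = 3) := by
  constructor
  · exact forest_acyclic hG1 hG2 hG3
  refine ⟨?_, ?_, ?_, ?_⟩
  · intro v h1
    rcases v with a | p
    · rw [show fdeg T (Sum.inl a) = finDeg T (Sum.inl a) + foutDeg T (Sum.inl a) from rfl, finDeg_inl hG1 a, foutDeg_inl hG1 hG3 a] at h1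
      have hl : T.IsLeaf a.1 := h1
      obtain ⟨h0, hone⟩ := hG1 _ hl
      rw [finDeg_inl hG1 a, foutDeg_inl hG1 hG3 a]
      exact ⟨h0, hone⟩
    · exact ⟨finDeg_inr p, foutDeg_inr hG1 hG3 p⟩
  · intro v h1
    rcases v with a | p
    · rw [show fdeg T (Sum.inl a) = finDeg T (Sum.inl a) + foutDeg T (Sum.inl a) from rfl, finDeg_inl hG1 a, foutDeg_inl hG1 hG3 a] at h1 ⊢
      have hl : ¬ T.IsLeaf a.1 := h1
      exact ⟨(hG2 _ hl).1, (hG2 _ hl).2⟩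
    · exact absurd (by rw [show fdeg T (Sum.inr p) = finDeg T (Sum.inr p) + foutDeg T (Sum.inr p) from rfl, finDeg_inr p, foutDeg_inr hG1 hG3 p]) h1
  · intro v
    rcases v with a | p
    · rw [foutDeg_inl hG1 hG3 a]
      exact a.2.1
    · rw [foutDeg_inr hG1 hG3 p]
      omega
  · intro c
    obtain ⟨v, rfl⟩ := Quot.exists_rep c
    obtain ⟨b, hbsink, hrt⟩ := exists_sink hG1 hG2 hG3 v
    have hb3 : finDeg T b = 3 :=
      (finDeg_eq_three_iff hG1 hG2 hG3 b).mpr (foutDeg_eq_zero_iff.mpr hbsink)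
    have hreach : (ForestGraph T).Reachable v b := reachable_of_rtg hrt
    have hmk : (ForestGraph T).connectedComponentMk b = Quot.mk _ v :=
      (SimpleGraph.ConnectedComponent.sound hreach).symm
    refine ⟨b, ⟨hmk, hb3⟩, ?_⟩
    rintro y ⟨hyc, hy3⟩
    have hysink : ∀ u, ¬ ForestArc T y u :=
      foutDeg_eq_zero_iff.mp ((finDeg_eq_three_iff hG1 hG2 hG3 y).mp hy3)
    have hyb : (ForestGraph T).Reachable y b :=
      (SimpleGraph.ConnectedComponent.exact (hyc.trans hmk.symm))
    obtain ⟨w⟩ := hyb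
    have hrt2 := walk_to_sink hG1 hG2 hG3 hbsink w
    rcases hrt2.cases_head with rfl | ⟨d, hyd, -⟩
    · rfl
    · exact absurd hyd (hysink d)
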